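/- In the double extension Lie algebra 𝔤(𝔨) = 𝔥 ⊕ 𝔨 ⊕ 𝔫 ⊕ 𝔪 built from a (𝔨,B)-extension of a naturally reductive infinitesimal model, the diagonal 𝔞 = {k + n_k : k ∈ 𝔨} ⊆ 𝔨 ⊕ 𝔫 is an Abelian ideal of 𝔤(𝔨) that commutes with 𝔥 ⊕ 𝔪. In particular 𝔤(𝔨) is never semisimple (when 𝔨 ≠ 0). -/

import Mathlib

open scoped RealInnerProductSpace BigOperators

/-- The Nomizu bracket of the double extension `𝔤(𝔨) = 𝔥 ⊕ 𝔨 ⊕ 𝔫 ⊕ 𝔪`, modelled on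
`(𝔪 →ₗ 𝔪) × K × K × M` (with `𝔥 ⊆ 𝔰𝔬(𝔪)` as endomorphisms of `𝔪`, the isotropy part
`𝔥 ⊕ 𝔨` acting on `𝔫 ⊕ 𝔪` via `ad ⊕ ψ`, `ψ = ad ⊕ φ`), built from the extended model
`T = T₀ + Σᵢ φ(kᵢ)∧nᵢ + 2T_𝔫`, `R = R₀ + Σᵢ ψ(kᵢ)⊙ψ(kᵢ)`. -/
noncomputable def dblBracket {K M : Type*} [LieRing K] [LieAlgebra ℝ K]
    [NormedAddCommGroup M] [InnerProductSpace ℝ M] {l : ℕ}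
    (Bf : K →ₗ[ℝ] K →ₗ[ℝ] ℝ) (k : Fin l → K) (φ : K →ₗ[ℝ] M →ₗ[ℝ] M)
    (T0 : M →ₗ[ℝ] M →ₗ[ℝ] M) (R0 : M →ₗ[ℝ] M →ₗ[ℝ] (M →ₗ[ℝ] M))
    (u v : (M →ₗ[ℝ] M) × K × K × M) : (M →ₗ[ℝ] M) × K × K × M :=
  let A := u.1; let a := u.2.1; let n := u.2.2.1; let x := u.2.2.2
  let A' := v.1; let b := v.2.1; let m := v.2.2.1; let y := v.2.2.2
  (A ∘ₗ A' - A' ∘ₗ A - R0 x y,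
   ⁅a, b⁆ - ∑ i : Fin l, (Bf ⁅k i, n⁆ m + ⟪φ (k i) x, y⟫) • k i,
   ⁅a, m⁆ - ⁅b, n⁆ - ((2 : ℝ) • ⁅n, m⁆ + ∑ i : Fin l, ⟪φ (k i) x, y⟫ • k i),
   A y - A' x + φ a y - φ b x - (φ n y - φ m x + T0 x y))

/-- In the double extension `𝔤(𝔨) = 𝔥 ⊕ 𝔨 ⊕ 𝔫 ⊕ 𝔪`, the diagonal
`𝔞 = {k + n_k : k ∈ 𝔨}` is an Abelian ideal commuting with `𝔥 ⊕ 𝔪`.  (Consequently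
`𝔤(𝔨)` is never semisimple when `𝔨 ≠ 0`.) -/
theorem diagonal_is_abelian_ideal
    {K M : Type*} [LieRing K] [LieAlgebra ℝ K]
    [NormedAddCommGroup M] [InnerProductSpace ℝ M] {l : ℕ}
    (Bf : K →ₗ[ℝ] K →ₗ[ℝ] ℝ)
    (hsymm : ∀ x y : K, Bf x y = Bf y x)
    (hinv : ∀ z x y : K, Bf ⁅z, x⁆ y + Bf x ⁅z, y⁆ = 0)
    (k : Fin l → K)
    (horth : ∀ i j, Bf (k i) (k j) = if i = j then (1 : ℝ) else 0)
    (hcomplete : ∀ x : K, ∑ i : Fin l, Bf x (k i) • k i = x)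
    (φ : K →ₗ[ℝ] M →ₗ[ℝ] M)
    (hφLie : ∀ a b : K, φ ⁅a, b⁆ = φ a ∘ₗ φ b - φ b ∘ₗ φ a)
    (hφskew : ∀ (a : K) (x y : M), ⟪φ a x, y⟫ = -⟪x, φ a y⟫)
    (T0 : M →ₗ[ℝ] M →ₗ[ℝ] M) (R0 : M →ₗ[ℝ] M →ₗ[ℝ] (M →ₗ[ℝ] M)) :
    ∀ c : K,
      -- the diagonal commutes with 𝔥 ⊕ 𝔪
      (∀ (A : M →ₗ[ℝ] M) (x : M),
        dblBracket Bf k φ T0 R0 (0, c, c, 0) (A, 0, 0, x) = 0 ∧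
        dblBracket Bf k φ T0 R0 (A, 0, 0, x) (0, c, c, 0) = 0) ∧
      -- the diagonal is Abelian
      (∀ c' : K, dblBracket Bf k φ T0 R0 (0, c, c, 0) (0, c', c', 0) = 0) ∧
      -- the diagonal is an ideal
      (∀ v : (M →ₗ[ℝ] M) × K × K × M,
        ∃ d : K, dblBracket Bf k φ T0 R0 (0, c, c, 0) v = (0, d, d, 0)) := by

  intro c
  have key : ∀ (c m : K), ∑ i : Fin l, Bf ⁅k i, c⁆ m • k i = ⁅c, m⁆ := by
    intro c m
    have h : ∀ i : Fin l, Bf ⁅k i, c⁆ m = Bf ⁅c, m⁆ (k i) := by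
      intro i
      have h1 := hinv c (k i) m
      have h2 : Bf ⁅c, k i⁆ m = - Bf ⁅k i, c⁆ m := by
        rw [← lie_skew (k i) c, map_neg, LinearMap.neg_apply, neg_neg]
      rw [hsymm ⁅c, m⁆ (k i)]
      linarith
    calc ∑ i : Fin l, Bf ⁅k i, c⁆ m • k i
        = ∑ i : Fin l, Bf ⁅c, m⁆ (k i) • k i := by
          exact Finset.sum_congr rfl fun i _ => by rw [h i]
      _ = ⁅c, m⁆ := hcomplete _
  refine ⟨?_, ?_, ?_⟩
  · intro A x
    constructor
    · simp [dblBracket, Prod.ext_iff]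
    · simp [dblBracket, Prod.ext_iff]
  · intro c'
    have hk := key c c'
    simp only [dblBracket, Prod.ext_iff, inner_zero_left, inner_zero_right,
      map_zero, LinearMap.zero_apply, add_zero, zero_smul, Finset.sum_const_zero,
      LinearMap.zero_comp, LinearMap.comp_zero, sub_zero, zero_sub, neg_zero,
      Prod.fst_zero, Prod.snd_zero]
    refine ⟨trivial, ?_, ?_, trivial⟩
    · simpa using sub_eq_zero_of_eq hk.symm
    · rw [← lie_skew c' c, two_smul]; abel
  · rintro ⟨A', b, m, y⟩
    refine ⟨⁅c, b⁆ - ⁅c, m⁆, ?_⟩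
    have hk := key c m
    simp only [dblBracket, Prod.ext_iff, inner_zero_left, inner_zero_right,
      map_zero, LinearMap.zero_apply, add_zero, zero_smul, Finset.sum_const_zero,
      LinearMap.zero_comp, LinearMap.comp_zero, sub_zero, zero_sub, neg_zero]
    refine ⟨by simp, ?_, ?_, by abel⟩
    · rw [hk]
    · rw [← lie_skew b c, two_smul]; abel
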